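/- The two cones f⁻¹((0,0,0))⁺ = f⁻¹({(0, 0, 0)}) ∩ {z : Re(z₁z₂z₃) ≥ 0} and f⁻¹((0,0,0))⁻ = f⁻¹({(0, 0, 0)}) ∩ {z : Re(z₁z₂z₃) ≤ 0} meet precisely at the origin: their intersection equals {(0, 0, 0)} ⊂ ℂ³. -/

import Mathlib

open Complex

/-- The Harvey–Lawson map `f : ℂ³ → ℝ³`. -/
noncomputable def HarveyLawson (z : Fin 3 → ℂ) : Fin 3 → ℝ :=
  ![(z 0 * z 1 * z 2).im,
    ‖z 0‖ ^ 2 - ‖z 1‖ ^ 2,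
    ‖z 0‖ ^ 2 - ‖z 2‖ ^ 2]

/-- The two cones `f⁻¹((0,0,0))⁺` and `f⁻¹((0,0,0))⁻` meet precisely at the origin. -/
theorem harveyLawson_cones_meet_at_origin :
    ((HarveyLawson ⁻¹' {![0, 0, 0]}) ∩ {z : Fin 3 → ℂ | 0 ≤ (z 0 * z 1 * z 2).re}) ∩
    ((HarveyLawson ⁻¹' {![0, 0, 0]}) ∩ {z : Fin 3 → ℂ | (z 0 * z 1 * z 2).re ≤ 0}) =
      {(0 : Fin 3 → ℂ)} := by
  ext z
  simp only [Set.mem_inter_iff, Set.mem_preimage, Set.mem_singleton_iff, Set.mem_setOf_eq,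
    HarveyLawson]
  constructor
  · rintro ⟨⟨hf, hge⟩, _, hle⟩
    have him : (z 0 * z 1 * z 2).im = 0 := congrFun hf 0
    have h1 : ‖z 0‖ ^ 2 - ‖z 1‖ ^ 2 = 0 := congrFun hf 1
    have h2 : ‖z 0‖ ^ 2 - ‖z 2‖ ^ 2 = 0 := congrFun hf 2
    have hre : (z 0 * z 1 * z 2).re = 0 := le_antisymm hle hge
    have hprod : z 0 * z 1 * z 2 = 0 := Complex.ext hre him
    have h01 : ‖z 0‖ = ‖z 1‖ := by
      have := sub_eq_zero.mp h1
      nlinarith [norm_nonneg (z 0), norm_nonneg (z 1)]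
    have h02 : ‖z 0‖ = ‖z 2‖ := by
      have := sub_eq_zero.mp h2
      nlinarith [norm_nonneg (z 0), norm_nonneg (z 2)]
    have h0 : z 0 = 0 := by
      rcases mul_eq_zero.mp hprod with h | h
      · rcases mul_eq_zero.mp h with h | h
        · exact h
        · rw [← norm_eq_zero, h01, norm_eq_zero]; exact h
      · rw [← norm_eq_zero, h02, norm_eq_zero]; exact h
    have h1' : z 1 = 0 := by
      rw [← norm_eq_zero, ← h01, norm_eq_zero]; exact h0
    have h2' : z 2 = 0 := by
      rw [← norm_eq_zero, ← h02, norm_eq_zero]; exact h0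
    funext i
    fin_cases i <;> simp [h0, h1', h2']
  · rintro rfl
    norm_num
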